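/- For g, h in the Farey group Γ, write Δ_g for the image of the set {0, 1, ∞} under the Möbius transformation g. Then Δ_g and Δ_h are neighboring tiles of the Farey tessellation — i.e. Δ_g ≠ Δ_h and |Δ_g ∩ Δ_h| = 2 — if and only if h = gs for some s ∈ {a, b, c}. -/

import Mathlib

open scoped MatrixGroups OnePoint
open Matrix MeasureTheory Filter Topology

noncomputable section

namespace Farey

/-- Möbius action of a real 2×2 matrix on `ℝ ∪ {∞}`. -/
def mobAux (M : Matrix (Fin 2) (Fin 2) ℝ) : OnePoint ℝ → OnePoint ℝ :=
  OnePoint.rec (if M 1 0 = 0 then ∞ else ((M 0 0 / M 1 0 : ℝ) : OnePoint ℝ))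
    (fun r => if M 1 0 * r + M 1 1 = 0 then ∞
      else (((M 0 0 * r + M 0 1) / (M 1 0 * r + M 1 1) : ℝ) : OnePoint ℝ))

@[simp] lemma mobAux_infty (M : Matrix (Fin 2) (Fin 2) ℝ) :
    mobAux M ∞ = if M 1 0 = 0 then ∞ else ((M 0 0 / M 1 0 : ℝ) : OnePoint ℝ) := rfl

@[simp] lemma mobAux_coe (M : Matrix (Fin 2) (Fin 2) ℝ) (r : ℝ) :
    mobAux M (r : OnePoint ℝ) = if M 1 0 * r + M 1 1 = 0 then ∞
      else (((M 0 0 * r + M 0 1) / (M 1 0 * r + M 1 1) : ℝ) : OnePoint ℝ) := rfl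

lemma mobAux_neg (M : Matrix (Fin 2) (Fin 2) ℝ) : mobAux (-M) = mobAux M := by
  funext x
  induction x using OnePoint.rec with
  | infty => simp [Matrix.neg_apply, neg_eq_zero, neg_div_neg_eq]
  | coe r =>
      rw [mobAux_coe, mobAux_coe]
      have h1 : (-M) 1 0 * r + (-M) 1 1 = -(M 1 0 * r + M 1 1) := by
        simp [Matrix.neg_apply]; ring
      have h0 : (-M) 0 0 * r + (-M) 0 1 = -(M 0 0 * r + M 0 1) := by
        simp [Matrix.neg_apply]; ring
      rw [h1, h0]
      simp only [neg_eq_zero, neg_div_neg_eq]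

end Farey

namespace Farey

/-- Möbius action of an integral 2×2 special linear matrix on `ℝ ∪ {∞}`. -/
def mobSL (g : SL(2, ℤ)) : OnePoint ℝ → OnePoint ℝ :=
  mobAux ((g : Matrix (Fin 2) (Fin 2) ℤ).map (Int.cast : ℤ → ℝ))

lemma mobSL_mul_center (g z : SL(2, ℤ)) (hz : z ∈ Subgroup.center SL(2, ℤ)) :
    mobSL (g * z) = mobSL g := by
  obtain ⟨r, hr, hscalar⟩ := Matrix.SpecialLinearGroup.mem_center_iff.mp hz
  have hr' : r = 1 ∨ r = -1 := by
    have : IsUnit r := IsUnit.of_mul_eq_one (a := r) (r ^ 1) (by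
      simpa [pow_succ, Fintype.card_fin] using hr)
    exact Int.isUnit_iff.mp this
  rcases hr' with h1 | h1
  · have : z = 1 := by
      ext i j
      have := congrFun (congrFun hscalar i) j
      simp [h1] at this
      simp [← this]
    simp [this]
  · have hzmat : (z : Matrix (Fin 2) (Fin 2) ℤ) = -1 := by
      ext i j
      have := congrFun (congrFun hscalar i) j
      simp [h1] at this
      simp [← this]
    unfold mobSL
    have : ((g * z : SL(2,ℤ)) : Matrix (Fin 2) (Fin 2) ℤ) = -(g : Matrix (Fin 2) (Fin 2) ℤ) := by
      rw [Matrix.SpecialLinearGroup.coe_mul, hzmat]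
      simp
    rw [this]
    have hmap : ((-(g : Matrix (Fin 2) (Fin 2) ℤ)).map (Int.cast : ℤ → ℝ))
        = -(((g : Matrix (Fin 2) (Fin 2) ℤ)).map (Int.cast : ℤ → ℝ)) := by
      ext i j
      simp
    rw [hmap, mobAux_neg]

/-- Möbius action of an element of `PSL(2,ℤ)` on `ℝ ∪ {∞}`. -/
def mob (x : PSL(2, ℤ)) : OnePoint ℝ → OnePoint ℝ :=
  Quotient.liftOn' x mobSL (by
    intro g h hgh
    have hmem : g⁻¹ * h ∈ Subgroup.center SL(2, ℤ) := QuotientGroup.leftRel_apply.mp hgh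
    have : h = g * (g⁻¹ * h) := by group
    rw [this, mobSL_mul_center g _ hmem])

end Farey

namespace Farey

/-- The matrix `A = [[1,-2],[1,-1]]` as an element of `SL(2,ℤ)`. -/
def A : SL(2, ℤ) := ⟨!![1, -2; 1, -1], by norm_num [Matrix.det_fin_two_of]⟩

/-- The matrix `B = [[0,-1],[1,0]]` as an element of `SL(2,ℤ)`. -/
def B : SL(2, ℤ) := ⟨!![0, -1; 1, 0], by norm_num [Matrix.det_fin_two_of]⟩

/-- The matrix `C = [[1,-1],[2,-1]]` as an element of `SL(2,ℤ)`. -/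
def C : SL(2, ℤ) := ⟨!![1, -1; 2, -1], by norm_num [Matrix.det_fin_two_of]⟩

/-- The element `a ∈ PSL(2,ℤ)`. -/
def a : PSL(2, ℤ) := QuotientGroup.mk A

/-- The element `b ∈ PSL(2,ℤ)`. -/
def b : PSL(2, ℤ) := QuotientGroup.mk B

/-- The element `c ∈ PSL(2,ℤ)`. -/
def c : PSL(2, ℤ) := QuotientGroup.mk C

/-- The Farey group: the subgroup of `PSL(2,ℤ)` generated by `a`, `b`, `c`. -/
def fareyGroup : Subgroup PSL(2, ℤ) := Subgroup.closure {a, b, c}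

/-- The word length of an element of `PSL(2,ℤ)` with respect to the generators
`a`, `b`, `c` of the Farey group. -/
def wordLength (x : PSL(2, ℤ)) : ℕ :=
  sInf {n | ∃ l : List PSL(2, ℤ), l.length = n ∧ (∀ s ∈ l, s = a ∨ s = b ∨ s = c) ∧ l.prod = x}

/-- The sphere of radius `n` in the Farey group for the word metric w.r.t. `{a,b,c}`. -/
def sphere (n : ℕ) : Set PSL(2, ℤ) := {x | x ∈ fareyGroup ∧ wordLength x = n}

end Farey

namespace Farey

/-- The mediant of two rationals, `p₁/q₁ ⊕ p₂/q₂ = (p₁+p₂)/(q₁+q₂)` (in lowest terms). -/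
def mediant (p q : ℚ) : ℚ := ((p.num + q.num : ℤ) : ℚ) / (((p.den : ℤ) + (q.den : ℤ) : ℤ) : ℚ)

/-- Insert the mediant between every two consecutive entries of a list of rationals. -/
def insertMediants : List ℚ → List ℚ
  | p :: q :: rest => p :: mediant p q :: insertMediants (q :: rest)
  | l => l

/-- The Farey sequences: `F_0 = (0,1)`, and `F_{n+1}` is obtained from `F_n` by inserting
mediants between consecutive terms. -/
def fareySeq : ℕ → List ℚ
  | 0 => [0, 1]
  | n + 1 => insertMediants (fareySeq n)

/-- `p, q` are consecutive terms of the Farey sequence `F_n`. -/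
def IsFareyPairIn (n : ℕ) (p q : ℚ) : Prop :=
  ∃ i : ℕ, (fareySeq n)[i]? = some p ∧ (fareySeq n)[i + 1]? = some q

/-- `p, q` form a Farey pair: they are consecutive terms of some Farey sequence. -/
def IsFareyPair (p q : ℚ) : Prop := ∃ n : ℕ, IsFareyPairIn n p q

/-- The `k`-th summand (`k = 0, 1, 2, …`) in the series defining Minkowski's question mark
function: `(−1)^k 2^{−(a₁+⋯+a_{k+1})}` when the continued fraction expansion
`x = [a₀; a₁, a₂, …]` has at least `k+1` partial denominators and `0` otherwise. -/
def qmTerm (x : ℝ) (k : ℕ) : ℝ :=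
  match (List.range (k + 1)).mapM (fun i => (GenContFract.of x).partDens.get? i) with
  | none => 0
  | some l => (-1 : ℝ) ^ k * (2 : ℝ) ^ (-(l.sum))

/-- Minkowski's question mark function on `[0,1]`:
`?(x) = 2 ∑_{k≥1} (−1)^{k+1} 2^{−(a₁+⋯+a_k)}` for `x = [0; a₁, a₂, …]`, `?(1) = 1`. -/
def questionMark (x : ℝ) : ℝ := if x = 1 then 1 else 2 * ∑' k : ℕ, qmTerm x k

/-- The extended Minkowski function `M̄(q) = (1/3)(∑_{k=−∞}^{m−1} 2^{−|k|} + ?(q−m)·2^{−|m|})`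
for `q ∈ [m, m+1]`. -/
def extM (q : ℝ) : ℝ :=
  (1 / 3) * ((∑' j : ℕ, (2 : ℝ) ^ (-|⌊q⌋ - 1 - (j : ℤ)|)) +
    questionMark (q - ⌊q⌋) * (2 : ℝ) ^ (-|⌊q⌋|))

instance : MeasurableSpace (OnePoint ℝ) := borel _
instance : BorelSpace (OnePoint ℝ) := ⟨rfl⟩

/-- `μ` is the extended Minkowski measure: the Borel probability measure on `ℝ ∪ {∞}` giving
no mass to `{∞}` whose cumulative distribution function is the extended Minkowski function. -/
def IsExtMinkowskiMeasure (μ : Measure (OnePoint ℝ)) : Prop :=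
  IsProbabilityMeasure μ ∧ μ {∞} = 0 ∧
    ∀ u v : ℝ, u ≤ v →
      μ ((fun r : ℝ => (r : OnePoint ℝ)) '' Set.Ico u v) = ENNReal.ofReal (extM v - extM u)

end Farey

namespace Farey

lemma mobAux_lit_infty (a b c d : ℝ) :
    mobAux !![a,b;c,d] ∞ = if c = 0 then ∞ else ((a / c : ℝ) : OnePoint ℝ) := by
  rw [mobAux_infty]; norm_num

lemma mobAux_lit_coe (a b c d r : ℝ) :
    mobAux !![a,b;c,d] (r : OnePoint ℝ) = if c * r + d = 0 then ∞
      else (((a * r + b) / (c * r + d) : ℝ) : OnePoint ℝ) := by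
  rw [mobAux_coe]; norm_num

lemma mobAux_comp (a b c d e f u v : ℝ) (hN : e * v - f * u ≠ 0) (x : OnePoint ℝ) :
    mobAux !![a*e+b*u, a*f+b*v; c*e+d*u, c*f+d*v] x
      = mobAux !![a,b;c,d] (mobAux !![e,f;u,v] x) := by
  induction x using OnePoint.rec with
  | infty =>
    rw [mobAux_lit_infty, mobAux_lit_infty]
    by_cases hu : u = 0
    · have he : e ≠ 0 := fun h => hN (by rw [hu, h]; ring)
      rw [if_pos hu, mobAux_lit_infty]
      by_cases hc : c = 0
      · rw [if_pos (by rw [hc, hu]; ring), if_pos hc]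
      · rw [if_neg (by rw [hu]; simpa using mul_ne_zero hc he), if_neg hc]
        rw [hu]
        congr 1
        field_simp
        try ring
    · rw [if_neg hu, mobAux_lit_coe]
      have key : c * (e / u) + d = (c * e + d * u) / u := by field_simp
      by_cases hz : c * e + d * u = 0
      · rw [if_pos hz, if_pos (by rw [key, hz, zero_div])]
      · rw [if_neg hz, if_neg (by rw [key]; exact div_ne_zero hz hu)]
        congr 1
        rw [key]
        field_simp
        try ring
  | coe r =>
    rw [mobAux_lit_coe, mobAux_lit_coe]
    have hden : (c*e+d*u) * r + (c*f+d*v) = c * (e*r+f) + d * (u*r+v) := by ring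
    have hnum : (a*e+b*u) * r + (a*f+b*v) = a * (e*r+f) + b * (u*r+v) := by ring
    rw [hden, hnum]
    by_cases hDz : u * r + v = 0
    · have hNmz : e * r + f ≠ 0 := by
        intro h
        exact hN (by linear_combination e * hDz - u * h)
      rw [if_pos hDz, mobAux_lit_infty, hDz]
      by_cases hc : c = 0
      · rw [if_pos (by rw [hc]; ring), if_pos hc]
      · rw [if_neg (by simpa using mul_ne_zero hc hNmz), if_neg hc]
        congr 1
        field_simp
        try ring
    · rw [if_neg hDz, mobAux_lit_coe]
      have key : c * ((e*r+f) / (u*r+v)) + d = (c * (e*r+f) + d * (u*r+v)) / (u*r+v) := by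
        rw [mul_div_assoc', div_add' _ _ _ hDz]
      by_cases hz : c * (e*r+f) + d * (u*r+v) = 0
      · rw [if_pos hz, if_pos (by rw [key, hz, zero_div])]
      · rw [if_neg hz, if_neg (by rw [key]; exact div_ne_zero hz hDz)]
        congr 1
        rw [key]
        rw [mul_div_assoc', div_add' _ _ _ hDz, div_div_div_cancel_right₀ hDz]
        try ring

lemma mobAux_mul' (M N : Matrix (Fin 2) (Fin 2) ℝ) (hN : N.det ≠ 0) :
    mobAux (M * N) = mobAux M ∘ mobAux N := by
  rw [Matrix.det_fin_two] at hN
  funext x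
  rw [Function.comp_apply]
  conv_lhs => rw [Matrix.eta_fin_two M, Matrix.eta_fin_two N]
  conv_rhs => rw [Matrix.eta_fin_two M, Matrix.eta_fin_two N]
  rw [Matrix.mul_fin_two]
  exact mobAux_comp _ _ _ _ _ _ _ _ hN x

lemma map_lit (a b c d : ℤ) :
    (!![a,b;c,d]).map (Int.cast : ℤ → ℝ) = !![(a:ℝ),(b:ℝ);(c:ℝ),(d:ℝ)] := by
  ext i j; fin_cases i <;> fin_cases j <;> simp [Matrix.map_apply]

lemma det_cast_ne (g : SL(2,ℤ)) :
    ((g : Matrix (Fin 2) (Fin 2) ℤ).map (Int.cast : ℤ → ℝ)).det ≠ 0 := by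
  have h : ((g : Matrix (Fin 2) (Fin 2) ℤ).map (Int.cast : ℤ → ℝ)).det
      = (((g : Matrix (Fin 2) (Fin 2) ℤ).det : ℤ) : ℝ) := by
    rw [Matrix.det_fin_two, Matrix.det_fin_two]
    simp [Matrix.map_apply]
  rw [h, g.prop]
  norm_num

lemma mobSL_mul (g h : SL(2,ℤ)) : mobSL (g * h) = mobSL g ∘ mobSL h := by
  unfold mobSL
  rw [Matrix.SpecialLinearGroup.coe_mul,
    show (Int.cast : ℤ → ℝ) = ⇑(Int.castRingHom ℝ) from rfl, Matrix.map_mul]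
  exact mobAux_mul' _ _ (det_cast_ne h)

lemma mob_mk (g : SL(2,ℤ)) : mob (QuotientGroup.mk g) = mobSL g := rfl

lemma mob_mul (x y : PSL(2,ℤ)) : mob (x * y) = mob x ∘ mob y := by
  induction x using QuotientGroup.induction_on with | H g =>
  induction y using QuotientGroup.induction_on with | H h =>
  rw [← QuotientGroup.mk_mul, mob_mk, mob_mk, mob_mk, mobSL_mul]

lemma mob_one : mob (1 : PSL(2,ℤ)) = id := by
  have h : mob (1 : PSL(2,ℤ)) = mobSL 1 := rfl
  rw [h]
  unfold mobSL
  funext x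
  induction x using OnePoint.rec with
  | infty => simp [Matrix.map_apply]
  | coe r => simp [Matrix.map_apply]

lemma mob_inj (x : PSL(2,ℤ)) : Function.Injective (mob x) := by
  have h : mob x⁻¹ ∘ mob x = id := by rw [← mob_mul, inv_mul_cancel, mob_one]
  exact Function.LeftInverse.injective (congrFun h)

/-- The order-3 rotation `T = [[1,-1],[1,0]]` of the base tile. -/
def T : SL(2,ℤ) := ⟨!![1, -1; 1, 0], by norm_num [Matrix.det_fin_two_of]⟩

/-- The class of `T` in `PSL(2,ℤ)`. -/
def t : PSL(2,ℤ) := QuotientGroup.mk T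

lemma mobSL_lit (m : SL(2,ℤ)) (aa bb cc dd : ℤ)
    (hm : (m : Matrix (Fin 2) (Fin 2) ℤ) = !![aa,bb;cc,dd]) :
    mobSL m = mobAux !![(aa:ℝ),(bb:ℝ);(cc:ℝ),(dd:ℝ)] := by
  unfold mobSL
  rw [hm, map_lit]

lemma mob_a_eq : mob a = mobAux !![(1:ℝ),(-2:ℝ);(1:ℝ),(-1:ℝ)] := by
  rw [show a = QuotientGroup.mk A from rfl, mob_mk, mobSL_lit A 1 (-2) 1 (-1) rfl]; norm_num

lemma mob_b_eq : mob b = mobAux !![(0:ℝ),(-1:ℝ);(1:ℝ),(0:ℝ)] := by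
  rw [show b = QuotientGroup.mk B from rfl, mob_mk, mobSL_lit B 0 (-1) 1 0 rfl]; norm_num

lemma mob_c_eq : mob c = mobAux !![(1:ℝ),(-1:ℝ);(2:ℝ),(-1:ℝ)] := by
  rw [show c = QuotientGroup.mk C from rfl, mob_mk, mobSL_lit C 1 (-1) 2 (-1) rfl]; norm_num

lemma mob_t_eq : mob t = mobAux !![(1:ℝ),(-1:ℝ);(1:ℝ),(0:ℝ)] := by
  rw [show t = QuotientGroup.mk T from rfl, mob_mk, mobSL_lit T 1 (-1) 1 0 rfl]; norm_num

lemma mob_t_zero : mob t ((0:ℝ) : OnePoint ℝ) = ∞ := by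
  rw [mob_t_eq, mobAux_lit_coe, if_pos (by norm_num)]
lemma mob_t_one : mob t ((1:ℝ) : OnePoint ℝ) = ((0:ℝ) : OnePoint ℝ) := by
  rw [mob_t_eq, mobAux_lit_coe, if_neg (by norm_num)]; norm_num
lemma mob_t_inf : mob t ∞ = ((1:ℝ) : OnePoint ℝ) := by
  rw [mob_t_eq, mobAux_lit_infty, if_neg (by norm_num)]; norm_num

/-- The base tile vertex set. -/
def Delta : Set (OnePoint ℝ) := {((0:ℝ) : OnePoint ℝ), ((1:ℝ) : OnePoint ℝ), ∞}

lemma val_cases (m n : ℤ)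
    (h : (if ((n:ℤ):ℝ) = 0 then ∞ else ((((m:ℤ):ℝ)/((n:ℤ):ℝ) : ℝ) : OnePoint ℝ)) ∈ Delta) :
    (n ≠ 0 ∧ m = 0) ∨ (n ≠ 0 ∧ m = n) ∨ n = 0 := by
  by_cases hn : ((n:ℤ):ℝ) = 0
  · right; right; exact_mod_cast hn
  · have hn' : n ≠ 0 := fun h0 => hn (by rw [h0]; norm_num)
    rw [if_neg hn] at h
    simp only [Delta, Set.mem_insert_iff, Set.mem_singleton_iff] at h
    rcases h with h | h | h
    · rw [OnePoint.coe_eq_coe, div_eq_iff hn, zero_mul] at h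
      exact Or.inl ⟨hn', by exact_mod_cast h⟩
    · rw [OnePoint.coe_eq_coe, div_eq_iff hn, one_mul] at h
      exact Or.inr (Or.inl ⟨hn', by exact_mod_cast h⟩)
    · exact absurd h (OnePoint.coe_ne_infty _)

lemma mobAux_int_inf (p q r s : ℤ) :
    mobAux !![(p:ℝ),(q:ℝ);(r:ℝ),(s:ℝ)] ∞
      = if ((r:ℤ):ℝ) = 0 then ∞ else ((((p:ℤ):ℝ)/((r:ℤ):ℝ) : ℝ) : OnePoint ℝ) :=
  mobAux_lit_infty _ _ _ _

lemma mobAux_int_zero (p q r s : ℤ) :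
    mobAux !![(p:ℝ),(q:ℝ);(r:ℝ),(s:ℝ)] ((0:ℝ) : OnePoint ℝ)
      = if ((s:ℤ):ℝ) = 0 then ∞ else ((((q:ℤ):ℝ)/((s:ℤ):ℝ) : ℝ) : OnePoint ℝ) := by
  rw [mobAux_lit_coe]
  simp only [mul_zero, zero_add]

lemma mobAux_int_one (p q r s : ℤ) :
    mobAux !![(p:ℝ),(q:ℝ);(r:ℝ),(s:ℝ)] ((1:ℝ) : OnePoint ℝ)
      = if (((r+s:ℤ)):ℝ) = 0 then ∞
        else ((((p+q:ℤ):ℝ)/(((r+s:ℤ)):ℝ) : ℝ) : OnePoint ℝ) := by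
  rw [mobAux_lit_coe]
  push_cast
  simp only [mul_one]

lemma neg_one_mem_center : (-1 : SL(2,ℤ)) ∈ Subgroup.center SL(2,ℤ) := by
  rw [Matrix.SpecialLinearGroup.mem_center_iff]
  refine ⟨-1, by norm_num, ?_⟩
  ext i j
  simp [Matrix.scalar_apply]

lemma mk_neg (g : SL(2,ℤ)) :
    (QuotientGroup.mk (-g) : PSL(2,ℤ)) = QuotientGroup.mk g := by
  have h1 : -g = g * (-1 : SL(2,ℤ)) := by
    apply Subtype.ext
    simp
  have h2 : (QuotientGroup.mk (-1 : SL(2,ℤ)) : PSL(2,ℤ)) = 1 :=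
    (QuotientGroup.eq_one_iff _).mpr neg_one_mem_center
  rw [h1, QuotientGroup.mk_mul, h2, mul_one]

end Farey

namespace Farey

lemma neg_lit (aa bb cc dd : ℤ) :
    -(!![aa,bb;cc,dd]) = !![-aa,-bb;-cc,-dd] := by
  ext i j; fin_cases i <;> fin_cases j <;> simp

lemma hAT : ((A * T : SL(2,ℤ)) : Matrix (Fin 2) (Fin 2) ℤ) = !![-1,-1;0,-1] := by
  rw [Matrix.SpecialLinearGroup.coe_mul,
    show (A : Matrix (Fin 2) (Fin 2) ℤ) = !![1,-2;1,-1] from rfl,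
    show (T : Matrix (Fin 2) (Fin 2) ℤ) = !![1,-1;1,0] from rfl, Matrix.mul_fin_two]
  norm_num

lemma hCT : ((C * (T * T) : SL(2,ℤ)) : Matrix (Fin 2) (Fin 2) ℤ) = !![-1,0;-1,-1] := by
  rw [Matrix.SpecialLinearGroup.coe_mul, Matrix.SpecialLinearGroup.coe_mul,
    show (C : Matrix (Fin 2) (Fin 2) ℤ) = !![1,-1;2,-1] from rfl,
    show (T : Matrix (Fin 2) (Fin 2) ℤ) = !![1,-1;1,0] from rfl, Matrix.mul_fin_two,
    Matrix.mul_fin_two]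
  norm_num

lemma classify (M : SL(2,ℤ))
    (h1 : mobSL M ((1:ℝ) : OnePoint ℝ) ∉ Delta)
    (h0 : mobSL M ((0:ℝ) : OnePoint ℝ) ∈ Delta)
    (hi : mobSL M ∞ ∈ Delta) :
    (QuotientGroup.mk M : PSL(2,ℤ)) = a * t ∨ (QuotientGroup.mk M : PSL(2,ℤ)) = b ∨
      (QuotientGroup.mk M : PSL(2,ℤ)) = c * (t * t) := by
  obtain ⟨p,q,r,s, hm⟩ : ∃ p q r s, (M : Matrix (Fin 2) (Fin 2) ℤ) = !![p,q;r,s] :=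
    ⟨_,_,_,_, Matrix.eta_fin_two _⟩
  have hdet : p * s - q * r = 1 := by
    have h2 := M.prop
    rw [hm, Matrix.det_fin_two_of] at h2
    exact h2
  rw [mobSL_lit M p q r s hm, mobAux_int_one] at h1
  rw [mobSL_lit M p q r s hm, mobAux_int_zero] at h0
  rw [mobSL_lit M p q r s hm, mobAux_int_inf] at hi
  rcases val_cases p r hi with ⟨hr,hp⟩|⟨hr,hp⟩|hr <;>
    rcases val_cases q s h0 with ⟨hs,hq⟩|⟨hs,hq⟩|hs
  · -- p=0, q=0 : det 0
    exfalso
    have h3 : (1:ℤ) = 0 := by linear_combination -hdet + s * hp - r * hq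
    exact one_ne_zero h3
  · -- p=0, q=s : value at 1 is ∞
    exfalso
    have h3 : (-s) * r = 1 := by linear_combination hdet - s * hp + r * hq
    have hrs : r + s = 0 := by
      rcases Int.mul_eq_one_iff_eq_one_or_neg_one.mp h3 with ⟨h4,h5⟩|⟨h4,h5⟩ <;> omega
    apply h1
    rw [if_pos (by rw [hrs]; norm_num)]
    simp [Delta]
  · -- p=0, s=0 : b
    have h3 : (-q) * r = 1 := by linear_combination hdet - p * hs
    rcases Int.mul_eq_one_iff_eq_one_or_neg_one.mp h3 with ⟨h4,h5⟩|⟨h4,h5⟩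
    · have hq' : q = -1 := by omega
      have hM : M = B := Subtype.ext (by rw [hm, hp, hq', h5, hs]; rfl)
      exact Or.inr (Or.inl (by rw [hM]; rfl))
    · have hq' : q = 1 := by omega
      have hM : M = -B := by
        apply Subtype.ext
        rw [hm, hp, hq', h5, hs, Matrix.SpecialLinearGroup.coe_neg,
          show (B : Matrix (Fin 2) (Fin 2) ℤ) = !![0,-1;1,0] from rfl, neg_lit]
        norm_num
      exact Or.inr (Or.inl (by rw [hM, mk_neg]; rfl))
  · -- p=r, q=0 : c * (t*t)
    have h3 : r * s = 1 := by linear_combination hdet - s * hp + r * hq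
    rcases Int.mul_eq_one_iff_eq_one_or_neg_one.mp h3 with ⟨h4,h5⟩|⟨h4,h5⟩
    · have hM : M = -(C * (T * T)) := by
        apply Subtype.ext
        rw [hm, hp, hq, h4, h5, Matrix.SpecialLinearGroup.coe_neg, hCT, neg_lit]
        norm_num
      refine Or.inr (Or.inr ?_)
      rw [hM, mk_neg, QuotientGroup.mk_mul, QuotientGroup.mk_mul]
      rfl
    · have hM : M = C * (T * T) := by
        apply Subtype.ext
        rw [hm, hp, hq, h4, h5, hCT]
      refine Or.inr (Or.inr ?_)
      rw [hM, QuotientGroup.mk_mul, QuotientGroup.mk_mul]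
      rfl
  · -- p=r, q=s : det 0
    exfalso
    have h3 : (1:ℤ) = 0 := by linear_combination -hdet + s * hp - r * hq
    exact one_ne_zero h3
  · -- p=r, s=0 : value at 1 is 0
    exfalso
    have h3 : (-q) * r = 1 := by linear_combination hdet - p * hs
    have hpq : p + q = 0 ∧ r + s ≠ 0 := by
      rcases Int.mul_eq_one_iff_eq_one_or_neg_one.mp h3 with ⟨h4,h5⟩|⟨h4,h5⟩ <;>
        constructor <;> omega
    apply h1
    rw [if_neg (by exact_mod_cast hpq.2), hpq.1]
    simp [Delta]
  · -- r=0, q=0 : value at 1 is 1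
    exfalso
    have h3 : p * s = 1 := by linear_combination hdet + q * hr
    have hps : p + q = r + s ∧ r + s ≠ 0 := by
      rcases Int.mul_eq_one_iff_eq_one_or_neg_one.mp h3 with ⟨h4,h5⟩|⟨h4,h5⟩ <;>
        constructor <;> omega
    apply h1
    rw [if_neg (by exact_mod_cast hps.2), hps.1,
      div_self (by exact_mod_cast hps.2)]
    simp [Delta]
  · -- r=0, q=s : a * t
    have h3 : p * s = 1 := by linear_combination hdet + q * hr
    rcases Int.mul_eq_one_iff_eq_one_or_neg_one.mp h3 with ⟨h4,h5⟩|⟨h4,h5⟩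
    · have hM : M = -(A * T) := by
        apply Subtype.ext
        rw [hm, hr, hq, h4, h5, Matrix.SpecialLinearGroup.coe_neg, hAT, neg_lit]
        norm_num
      exact Or.inl (by rw [hM, mk_neg, QuotientGroup.mk_mul]; rfl)
    · have hM : M = A * T := by
        apply Subtype.ext
        rw [hm, hr, hq, h4, h5, hAT]
      exact Or.inl (by rw [hM, QuotientGroup.mk_mul]; rfl)
  · -- r=0, s=0 : det 0
    exfalso
    have h3 : (1:ℤ) = 0 := by linear_combination -hdet + p * hs - q * hr
    exact one_ne_zero h3

end Farey
namespace Farey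

def cosList1 : List (Matrix (Fin 2) (Fin 2) (ZMod 3)) :=
  [!![0,1;2,2], !![0,2;1,1], !![1,0;2,1], !![1,1;0,1], !![1,2;1,0], !![2,0;1,2], !![2,1;2,0], !![2,2;0,2]]

def cosList2 : List (Matrix (Fin 2) (Fin 2) (ZMod 3)) :=
  [!![0,1;2,1], !![0,2;1,2], !![1,0;1,1], !![1,1;2,0], !![1,2;0,1], !![2,0;2,2], !![2,1;0,2], !![2,2;1,0]]

def f3 (m : Matrix (Fin 2) (Fin 2) (ZMod 3)) : ZMod 3 :=
  if m ∈ cosList1 then 1 else if m ∈ cosList2 then 2 else 0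

def fhom : SL(2, ZMod 3) →* Multiplicative (ZMod 3) where
  toFun x := Multiplicative.ofAdd (f3 x)
  map_one' := by decide
  map_mul' := by decide

def psi : SL(2, ℤ) →* Multiplicative (ZMod 3) :=
  fhom.comp (Matrix.SpecialLinearGroup.map (Int.castRingHom (ZMod 3)))

lemma psi_apply (g : SL(2,ℤ)) :
    psi g = Multiplicative.ofAdd
      (f3 ((g : Matrix (Fin 2) (Fin 2) ℤ).map (Int.cast : ℤ → ZMod 3))) := rfl

lemma center_le_ker_psi : Subgroup.center SL(2,ℤ) ≤ psi.ker := by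
  intro z hz
  obtain ⟨r, hr, hscalar⟩ := Matrix.SpecialLinearGroup.mem_center_iff.mp hz
  have hr' : r = 1 ∨ r = -1 := by
    have : IsUnit r := IsUnit.of_mul_eq_one (a := r) (r ^ 1) (by
      simpa [pow_succ, Fintype.card_fin] using hr)
    exact Int.isUnit_iff.mp this
  have hmat : (z : Matrix (Fin 2) (Fin 2) ℤ) = 1 ∨ (z : Matrix (Fin 2) (Fin 2) ℤ) = -1 := by
    rcases hr' with h1 | h1
    · left; ext i j
      have := congrFun (congrFun hscalar i) j
      simp [h1] at this
      simp [← this]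
    · right; ext i j
      have := congrFun (congrFun hscalar i) j
      simp [h1] at this
      simp [← this]
  rw [MonoidHom.mem_ker, psi_apply]
  rcases hmat with h | h <;> rw [h]
  · rw [show ((1 : Matrix (Fin 2) (Fin 2) ℤ).map (Int.cast : ℤ → ZMod 3)) = 1 by
      ext i j; fin_cases i <;> fin_cases j <;> simp [Matrix.map_apply, Matrix.one_apply]]
    decide
  · rw [show (((-1) : Matrix (Fin 2) (Fin 2) ℤ).map (Int.cast : ℤ → ZMod 3)) = !![2,0;0,2] by
      ext i j; fin_cases i <;> fin_cases j <;>
        simp [Matrix.map_apply, Matrix.one_apply] <;> decide]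
    decide

def phi : PSL(2, ℤ) →* Multiplicative (ZMod 3) :=
  QuotientGroup.lift (Subgroup.center SL(2,ℤ)) psi center_le_ker_psi

lemma phi_mk (g : SL(2,ℤ)) : phi (QuotientGroup.mk g) = psi g := rfl

lemma mapZ (aa bb cc dd : ℤ) :
    (!![aa,bb;cc,dd]).map (Int.cast : ℤ → ZMod 3) = !![(aa:ZMod 3),bb;cc,dd] := by
  ext i j; fin_cases i <;> fin_cases j <;> simp [Matrix.map_apply]

lemma phi_a : phi a = 1 := by
  rw [show a = QuotientGroup.mk A from rfl, phi_mk, psi_apply,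
    show (A : Matrix (Fin 2) (Fin 2) ℤ) = !![1,-2;1,-1] from rfl, mapZ]
  norm_num
  decide

lemma phi_b : phi b = 1 := by
  rw [show b = QuotientGroup.mk B from rfl, phi_mk, psi_apply,
    show (B : Matrix (Fin 2) (Fin 2) ℤ) = !![0,-1;1,0] from rfl, mapZ]
  norm_num
  decide

lemma phi_c : phi c = 1 := by
  rw [show c = QuotientGroup.mk C from rfl, phi_mk, psi_apply,
    show (C : Matrix (Fin 2) (Fin 2) ℤ) = !![1,-1;2,-1] from rfl, mapZ]
  norm_num
  decide

lemma phi_t : phi t = Multiplicative.ofAdd (1 : ZMod 3) := by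
  rw [show t = QuotientGroup.mk T from rfl, phi_mk, psi_apply,
    show (T : Matrix (Fin 2) (Fin 2) ℤ) = !![1,-1;1,0] from rfl, mapZ]
  norm_num
  decide

lemma phi_farey {x : PSL(2,ℤ)} (hx : x ∈ fareyGroup) : phi x = 1 := by
  have : fareyGroup ≤ phi.ker := by
    rw [fareyGroup, Subgroup.closure_le]
    rintro s (rfl | rfl | rfl)
    · exact phi_a
    · exact phi_b
    · exact phi_c
  exact this hx

end Farey

namespace Farey

lemma mob_a_zero : mob a ((0:ℝ) : OnePoint ℝ) = ((2:ℝ) : OnePoint ℝ) := by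
  rw [mob_a_eq, mobAux_lit_coe, if_neg (by norm_num)]; norm_num
lemma mob_a_one : mob a ((1:ℝ) : OnePoint ℝ) = ∞ := by
  rw [mob_a_eq, mobAux_lit_coe, if_pos (by norm_num)]
lemma mob_a_inf : mob a ∞ = ((1:ℝ) : OnePoint ℝ) := by
  rw [mob_a_eq, mobAux_lit_infty, if_neg (by norm_num)]; norm_num

lemma mob_b_zero : mob b ((0:ℝ) : OnePoint ℝ) = ∞ := by
  rw [mob_b_eq, mobAux_lit_coe, if_pos (by norm_num)]
lemma mob_b_one : mob b ((1:ℝ) : OnePoint ℝ) = ((-1:ℝ) : OnePoint ℝ) := by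
  rw [mob_b_eq, mobAux_lit_coe, if_neg (by norm_num)]; norm_num
lemma mob_b_inf : mob b ∞ = ((0:ℝ) : OnePoint ℝ) := by
  rw [mob_b_eq, mobAux_lit_infty, if_neg (by norm_num)]; norm_num

lemma mob_c_zero : mob c ((0:ℝ) : OnePoint ℝ) = ((1:ℝ) : OnePoint ℝ) := by
  rw [mob_c_eq, mobAux_lit_coe, if_neg (by norm_num)]; norm_num
lemma mob_c_one : mob c ((1:ℝ) : OnePoint ℝ) = ((0:ℝ) : OnePoint ℝ) := by
  rw [mob_c_eq, mobAux_lit_coe, if_neg (by norm_num)]; norm_num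
lemma mob_c_inf : mob c ∞ = ((1/2:ℝ) : OnePoint ℝ) := by
  rw [mob_c_eq, mobAux_lit_infty, if_neg (by norm_num)]

lemma image_delta (x : PSL(2,ℤ)) :
    mob x '' Delta = {mob x ((0:ℝ) : OnePoint ℝ), mob x ((1:ℝ) : OnePoint ℝ), mob x ∞} := by
  rw [Delta, Set.image_insert_eq, Set.image_insert_eq, Set.image_singleton]

lemma delta_finite : Delta.Finite :=
  (Set.finite_singleton _).insert _ |>.insert _

lemma zero_ne_one' : ((0:ℝ) : OnePoint ℝ) ≠ ((1:ℝ) : OnePoint ℝ) := by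
  rw [Ne, OnePoint.coe_eq_coe]; norm_num

lemma delta_ncard : Delta.ncard = 3 := by
  rw [Delta, Set.ncard_insert_of_notMem (by
      simp [OnePoint.coe_eq_coe]) ((Set.finite_singleton _).insert _),
    Set.ncard_insert_of_notMem (by simp) (Set.finite_singleton _),
    Set.ncard_singleton]

lemma img_a : mob a '' Delta
    = {((2:ℝ) : OnePoint ℝ), ∞, ((1:ℝ) : OnePoint ℝ)} := by
  rw [image_delta, mob_a_zero, mob_a_one, mob_a_inf]

lemma img_b : mob b '' Delta
    = {∞, ((-1:ℝ) : OnePoint ℝ), ((0:ℝ) : OnePoint ℝ)} := by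
  rw [image_delta, mob_b_zero, mob_b_one, mob_b_inf]

lemma img_c : mob c '' Delta
    = {((1:ℝ) : OnePoint ℝ), ((0:ℝ) : OnePoint ℝ), ((1/2:ℝ) : OnePoint ℝ)} := by
  rw [image_delta, mob_c_zero, mob_c_one, mob_c_inf]

lemma inter_a : Delta ∩ mob a '' Delta = {((1:ℝ) : OnePoint ℝ), ∞} := by
  rw [img_a]
  ext z
  simp only [Delta, Set.mem_inter_iff, Set.mem_insert_iff, Set.mem_singleton_iff]
  constructor
  · rintro ⟨h1 | h1 | h1, h2 | h2 | h2⟩ <;> subst h1 <;>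
      first
        | (left; rfl)
        | (right; rfl)
        | (exfalso; revert h2; simp [OnePoint.coe_eq_coe]; try norm_num)
  · rintro (rfl | rfl)
    · exact ⟨Or.inr (Or.inl rfl), Or.inr (Or.inr rfl)⟩
    · exact ⟨Or.inr (Or.inr rfl), Or.inr (Or.inl rfl)⟩

lemma inter_b : Delta ∩ mob b '' Delta = {((0:ℝ) : OnePoint ℝ), ∞} := by
  rw [img_b]
  ext z
  simp only [Delta, Set.mem_inter_iff, Set.mem_insert_iff, Set.mem_singleton_iff]
  constructor
  · rintro ⟨h1 | h1 | h1, h2 | h2 | h2⟩ <;> subst h1 <;>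
      first
        | (left; rfl)
        | (right; rfl)
        | (exfalso; revert h2; simp [OnePoint.coe_eq_coe]; try norm_num)
  · rintro (rfl | rfl)
    · exact ⟨Or.inl rfl, Or.inr (Or.inr rfl)⟩
    · exact ⟨Or.inr (Or.inr rfl), Or.inl rfl⟩

lemma inter_c : Delta ∩ mob c '' Delta = {((0:ℝ) : OnePoint ℝ), ((1:ℝ) : OnePoint ℝ)} := by
  rw [img_c]
  ext z
  simp only [Delta, Set.mem_inter_iff, Set.mem_insert_iff, Set.mem_singleton_iff]
  constructor
  · rintro ⟨h1 | h1 | h1, h2 | h2 | h2⟩ <;> subst h1 <;>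
      first
        | (left; rfl)
        | (right; rfl)
        | (exfalso; revert h2; simp [OnePoint.coe_eq_coe]; try norm_num)
  · rintro (rfl | rfl)
    · exact ⟨Or.inl rfl, Or.inr (Or.inl rfl)⟩
    · exact ⟨Or.inr (Or.inl rfl), Or.inl rfl⟩

lemma pair_ncard {u v : OnePoint ℝ} (h : u ≠ v) :
    ({u, v} : Set (OnePoint ℝ)).ncard = 2 := by
  rw [Set.ncard_insert_of_notMem (by simpa using h) (Set.finite_singleton _),
    Set.ncard_singleton]

lemma mem_abc (x : PSL(2,ℤ)) (hx : x ∈ fareyGroup)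
    (hne : Delta ≠ mob x '' Delta)
    (hcard : (Delta ∩ mob x '' Delta).ncard = 2) :
    x = a ∨ x = b ∨ x = c := by
  have himg := image_delta x
  by_cases h0 : mob x ((0:ℝ) : OnePoint ℝ) ∈ Delta <;>
    by_cases h1 : mob x ((1:ℝ) : OnePoint ℝ) ∈ Delta <;>
      by_cases hinf : mob x ∞ ∈ Delta
  · -- all in : image = Delta, contradiction
    exfalso
    apply hne
    refine (Set.eq_of_subset_of_ncard_le ?_ ?_ delta_finite).symm
    · rw [himg]
      rintro z (rfl | rfl | rfl) <;> assumption
    · rw [Set.ncard_image_of_injective Delta (mob_inj x)]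
  · -- ∞ out : use x*(t*t)
    obtain ⟨M, hM⟩ := QuotientGroup.mk_surjective (x * (t * t))
    have hmob : mobSL M = mob x ∘ (mob t ∘ mob t) := by
      rw [← mob_mk, hM, mob_mul, mob_mul]
    have c1 : mobSL M ((1:ℝ) : OnePoint ℝ) ∉ Delta := by
      rw [hmob]
      simpa [mob_t_one, mob_t_zero] using hinf
    have c0 : mobSL M ((0:ℝ) : OnePoint ℝ) ∈ Delta := by
      rw [hmob]
      simpa [mob_t_zero, mob_t_inf] using h1
    have ci : mobSL M ∞ ∈ Delta := by
      rw [hmob]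
      simpa [mob_t_inf, mob_t_one] using h0
    rcases classify M c1 c0 ci with h | h | h <;> rw [hM] at h
    · exfalso
      have hphi := congrArg phi h
      rw [_root_.map_mul, _root_.map_mul, _root_.map_mul, phi_farey hx, phi_t, phi_a] at hphi
      exact absurd hphi (by decide)
    · exfalso
      have hphi := congrArg phi h
      rw [_root_.map_mul, _root_.map_mul, phi_farey hx, phi_t, phi_b] at hphi
      exact absurd hphi (by decide)
    · exact Or.inr (Or.inr (mul_right_cancel h))
  · -- 1 out : use x
    obtain ⟨M, hM⟩ := QuotientGroup.mk_surjective x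
    have hmob : mobSL M = mob x := by rw [← mob_mk, hM]
    rcases classify M (by rw [hmob]; exact h1) (by rw [hmob]; exact h0)
        (by rw [hmob]; exact hinf) with h | h | h <;> rw [hM] at h
    · exfalso
      have hphi := congrArg phi h
      rw [_root_.map_mul, phi_farey hx, phi_t, phi_a] at hphi
      exact absurd hphi (by decide)
    · exact Or.inr (Or.inl h)
    · exfalso
      have hphi := congrArg phi h
      rw [_root_.map_mul, _root_.map_mul, phi_farey hx, phi_t, phi_c] at hphi
      exact absurd hphi (by decide)
  · -- 1 and ∞ out : intersection too small
    exfalso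
    have hsub : Delta ∩ mob x '' Delta ⊆ {mob x ((0:ℝ) : OnePoint ℝ)} := by
      rintro z ⟨hz1, hz2⟩
      rw [himg] at hz2
      rcases hz2 with rfl | rfl | rfl
      · rfl
      · exact absurd hz1 h1
      · exact absurd hz1 hinf
    have := Set.ncard_le_ncard hsub (Set.finite_singleton _)
    rw [hcard, Set.ncard_singleton] at this
    omega
  · -- 0 out : use x*t
    obtain ⟨M, hM⟩ := QuotientGroup.mk_surjective (x * t)
    have hmob : mobSL M = mob x ∘ mob t := by rw [← mob_mk, hM, mob_mul]
    have c1 : mobSL M ((1:ℝ) : OnePoint ℝ) ∉ Delta := by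
      rw [hmob]
      simpa [mob_t_one] using h0
    have c0 : mobSL M ((0:ℝ) : OnePoint ℝ) ∈ Delta := by
      rw [hmob]
      simpa [mob_t_zero] using hinf
    have ci : mobSL M ∞ ∈ Delta := by
      rw [hmob]
      simpa [mob_t_inf] using h1
    rcases classify M c1 c0 ci with h | h | h <;> rw [hM] at h
    · exact Or.inl (mul_right_cancel h)
    · exfalso
      have hphi := congrArg phi h
      rw [_root_.map_mul, phi_farey hx, phi_t, phi_b] at hphi
      exact absurd hphi (by decide)
    · exfalso
      have hphi := congrArg phi h
      rw [_root_.map_mul, _root_.map_mul, _root_.map_mul, phi_farey hx, phi_t, phi_c] at hphi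
      exact absurd hphi (by decide)
  · -- 0 and ∞ out
    exfalso
    have hsub : Delta ∩ mob x '' Delta ⊆ {mob x ((1:ℝ) : OnePoint ℝ)} := by
      rintro z ⟨hz1, hz2⟩
      rw [himg] at hz2
      rcases hz2 with rfl | rfl | rfl
      · exact absurd hz1 h0
      · rfl
      · exact absurd hz1 hinf
    have := Set.ncard_le_ncard hsub (Set.finite_singleton _)
    rw [hcard, Set.ncard_singleton] at this
    omega
  · -- 0 and 1 out
    exfalso
    have hsub : Delta ∩ mob x '' Delta ⊆ {mob x ∞} := by
      rintro z ⟨hz1, hz2⟩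
      rw [himg] at hz2
      rcases hz2 with rfl | rfl | rfl
      · exact absurd hz1 h0
      · exact absurd hz1 h1
      · rfl
    have := Set.ncard_le_ncard hsub (Set.finite_singleton _)
    rw [hcard, Set.ncard_singleton] at this
    omega
  · -- all out
    exfalso
    have hsub : Delta ∩ mob x '' Delta ⊆ (∅ : Set (OnePoint ℝ)) := by
      rintro z ⟨hz1, hz2⟩
      rw [himg] at hz2
      rcases hz2 with rfl | rfl | rfl
      · exact absurd hz1 h0
      · exact absurd hz1 h1
      · exact absurd hz1 hinf
    have := Set.ncard_le_ncard hsub Set.finite_empty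
    rw [hcard] at this
    simp at this

end Farey

open Farey

/-- **Lemma (neighboring tiles).** For `g, h` in the Farey group, write `Δ_g` for the image of
`{0,1,∞}` under the Möbius transformation `g`.  Then `Δ_g` and `Δ_h` are neighboring tiles of
the Farey tessellation — i.e. `Δ_g ≠ Δ_h` and `|Δ_g ∩ Δ_h| = 2` — if and only if `h = g·s`
for some `s ∈ {a,b,c}`. -/
theorem neighbor_iff (g h : PSL(2, ℤ)) (hg : g ∈ fareyGroup) (hh : h ∈ fareyGroup) :
    (mob g '' {((0 : ℝ) : OnePoint ℝ), ((1 : ℝ) : OnePoint ℝ), ∞} ≠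
        mob h '' {((0 : ℝ) : OnePoint ℝ), ((1 : ℝ) : OnePoint ℝ), ∞} ∧
      ((mob g '' {((0 : ℝ) : OnePoint ℝ), ((1 : ℝ) : OnePoint ℝ), ∞}) ∩
        (mob h '' {((0 : ℝ) : OnePoint ℝ), ((1 : ℝ) : OnePoint ℝ), ∞})).ncard = 2) ↔
    ∃ s ∈ ({a, b, c} : Set PSL(2, ℤ)), h = g * s := by
  have hD : ({((0 : ℝ) : OnePoint ℝ), ((1 : ℝ) : OnePoint ℝ), ∞} : Set (OnePoint ℝ))
      = Delta := rfl
  simp only [hD]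
  constructor
  · rintro ⟨hne, hcard⟩
    have hgx : h = g * (g⁻¹ * h) := by group
    have hxmem : g⁻¹ * h ∈ fareyGroup := mul_mem (inv_mem hg) hh
    have himgh : mob h '' Delta = mob g '' (mob (g⁻¹ * h) '' Delta) := by
      conv_lhs => rw [hgx]
      rw [mob_mul, Set.image_comp]
    have hne' : Delta ≠ mob (g⁻¹ * h) '' Delta := by
      intro hEq
      apply hne
      rw [himgh, ← hEq]
    have hcard' : (Delta ∩ mob (g⁻¹ * h) '' Delta).ncard = 2 := by
      rw [himgh, ← Set.image_inter (mob_inj g),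
        Set.ncard_image_of_injective _ (mob_inj g)] at hcard
      exact hcard
    rcases mem_abc _ hxmem hne' hcard' with h' | h' | h'
    · exact ⟨a, Or.inl rfl, by rw [hgx, h']⟩
    · exact ⟨b, Or.inr (Or.inl rfl), by rw [hgx, h']⟩
    · exact ⟨c, Or.inr (Or.inr rfl), by rw [hgx, h']⟩
  · rintro ⟨s, hs, rfl⟩
    have himgh : mob (g * s) '' Delta = mob g '' (mob s '' Delta) := by
      rw [mob_mul, Set.image_comp]
    constructor
    · intro hEq
      have hDs : Delta = mob s '' Delta := by
        apply Set.image_injective.mpr (mob_inj g)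
        rw [← himgh]
        exact hEq
      rcases hs with rfl | rfl | rfl
      · rw [img_a] at hDs
        have h2 : ((2:ℝ) : OnePoint ℝ) ∈ Delta := by rw [hDs]; simp
        norm_num [Delta, Set.mem_insert_iff, Set.mem_singleton_iff,
          OnePoint.coe_eq_coe, OnePoint.coe_ne_infty] at h2
      · rw [img_b] at hDs
        have h2 : ((-1:ℝ) : OnePoint ℝ) ∈ Delta := by rw [hDs]; simp
        norm_num [Delta, Set.mem_insert_iff, Set.mem_singleton_iff,
          OnePoint.coe_eq_coe, OnePoint.coe_ne_infty] at h2
      · rw [img_c] at hDs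
        have h2 : ((1/2:ℝ) : OnePoint ℝ) ∈ Delta := by rw [hDs]; simp
        norm_num [Delta, Set.mem_insert_iff, Set.mem_singleton_iff,
          OnePoint.coe_eq_coe, OnePoint.coe_ne_infty] at h2
    · rw [himgh, ← Set.image_inter (mob_inj g),
        Set.ncard_image_of_injective _ (mob_inj g)]
      rcases hs with rfl | rfl | rfl
      · rw [inter_a]; exact pair_ncard (OnePoint.coe_ne_infty _)
      · rw [inter_b]; exact pair_ncard (OnePoint.coe_ne_infty _)
      · rw [inter_c]; exact pair_ncard zero_ne_one'
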